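/- Let q be a prime power, t ≥ 2 with t | q-1, and H ≤ F_q^× the subgroup of order t. Let u = [a,b] and v = [a',b'] be vertices of Füredi's graph G_t(q) with (a,b), (a',b') linearly independent over F_q. Then u and v have exactly t common neighbors, namely the vertices w_h = [x_h, y_h] for h ∈ H, where (x_h, y_h) is the unique solution of a·x_h + b·y_h = 1 and a'·x_h + b'·y_h = h. -/

import Mathlib

/-- The `H`-orbit relation on nonzero points of `F × F`, where `H = {h : h^t = 1}` is the
multiplicative subgroup of `t`-th roots of unity. -/
def FurediRel {F : Type*} [Field F] (t : ℕ) :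
    {p : F × F // p ≠ 0} → {p : F × F // p ≠ 0} → Prop :=
  fun v w => ∃ h : F, h ^ t = 1 ∧
    (w : F × F) = (h * (v : F × F).1, h * (v : F × F).2)

/-- The vertex set of Füredi's graph `G_t(q)`: `H`-orbits of nonzero points of `F × F`. -/
def FurediVertex (F : Type*) [Field F] (t : ℕ) := Quot (FurediRel (F := F) t)

/-- Adjacency in Füredi's graph: `[a,b] ~ [x,y]` iff `ax + by ∈ H`, i.e. `(ax+by)^t = 1`. -/
def FurediAdj {F : Type*} [Field F] {t : ℕ} (u w : FurediVertex F t) : Prop :=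
  ∃ p q : {p : F × F // p ≠ 0}, Quot.mk (FurediRel t) p = u ∧ Quot.mk (FurediRel t) q = w ∧
    ((p : F × F).1 * (q : F × F).1 + (p : F × F).2 * (q : F × F).2) ^ t = 1

lemma furediRel_equivalence {F : Type*} [Field F] {t : ℕ} (ht : 0 < t) :
    Equivalence (FurediRel (F := F) t) := by
  constructor
  · intro v; exact ⟨1, one_pow t, by simp⟩
  · rintro v w ⟨h, h1, hw⟩
    have hne : h ≠ 0 := fun h0 => by simp [h0, zero_pow ht.ne'] at h1
    refine ⟨h⁻¹, by rw [inv_pow, h1, inv_one], ?_⟩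
    rw [hw]; simp [hne]
  · rintro u v w ⟨h, h1, hv⟩ ⟨g, g1, hw⟩
    refine ⟨g * h, by rw [mul_pow, h1, g1, mul_one], ?_⟩
    rw [hw, hv]; simp [mul_assoc]

lemma furediRel_of_quot_eq {F : Type*} [Field F] {t : ℕ} (ht : 0 < t)
    {p q : {p : F × F // p ≠ 0}}
    (h : Quot.mk (FurediRel t) p = Quot.mk (FurediRel t) q) : FurediRel t p q :=
  (furediRel_equivalence ht).eqvGen_iff.mp (Quot.eqvGen_exact h)

/-- If `u = [a,b]` and `v = [a',b']` are vertices of Füredi's graph with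
`(a,b), (a',b')` linearly independent, then for each `h ∈ H` the system `ax+by=1`,
`a'x+b'y=h` has a unique solution `(x_h,y_h)`; `u` and `v` have exactly `t` common
neighbors, namely the vertices `w_h = [x_h, y_h]` for `h ∈ H`. -/
theorem stmt_18 {F : Type*} [Field F] [Fintype F] (t : ℕ) (ht : 2 ≤ t)
    (hdvd : t ∣ Fintype.card F - 1) (a b a' b' : F)
    (hab : ((a, b) : F × F) ≠ 0) (hab' : ((a', b') : F × F) ≠ 0)
    (hind : LinearIndependent F ![((a, b) : F × F), ((a', b') : F × F)]) :
    (∀ h : F, h ^ t = 1 →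
      ∃! q : F × F, a * q.1 + b * q.2 = 1 ∧ a' * q.1 + b' * q.2 = h) ∧
    {w : FurediVertex F t |
        FurediAdj (Quot.mk (FurediRel t) ⟨(a, b), hab⟩) w ∧
        FurediAdj (Quot.mk (FurediRel t) ⟨(a', b'), hab'⟩) w}.ncard = t ∧
    ∀ w : FurediVertex F t,
      (FurediAdj (Quot.mk (FurediRel t) ⟨(a, b), hab⟩) w ∧
        FurediAdj (Quot.mk (FurediRel t) ⟨(a', b'), hab'⟩) w) ↔
      ∃ (h x y : F) (hxy : ((x, y) : F × F) ≠ 0), h ^ t = 1 ∧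
        a * x + b * y = 1 ∧ a' * x + b' * y = h ∧
        w = Quot.mk (FurediRel t) ⟨(x, y), hxy⟩ := by
  classical
  have ht0 : 0 < t := by omega
  -- determinant is nonzero
  have hD : a * b' - a' * b ≠ 0 := by
    intro h0
    rw [LinearIndependent.pair_iff] at hind
    have h1 := hind b' (-b) (by
      rw [Prod.smul_mk, Prod.smul_mk, Prod.mk_add_mk, Prod.mk_eq_zero]
      constructor
      · simp only [smul_eq_mul]; linear_combination h0
      · simp only [smul_eq_mul]; ring)
    have h2 := hind a' (-a) (by
      rw [Prod.smul_mk, Prod.smul_mk, Prod.mk_add_mk, Prod.mk_eq_zero]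
      constructor
      · simp only [smul_eq_mul]; ring
      · simp only [smul_eq_mul]; linear_combination -h0)
    apply hab
    rw [Prod.mk_eq_zero]
    exact ⟨neg_eq_zero.mp h2.2, neg_eq_zero.mp h1.2⟩
  -- the explicit solution
  set xs : F → F := fun h => (b' - b * h) / (a * b' - a' * b) with hxs
  set ys : F → F := fun h => (a * h - a') / (a * b' - a' * b) with hys
  have hsol : ∀ h : F, a * xs h + b * ys h = 1 ∧ a' * xs h + b' * ys h = h := by
    intro h
    constructor
    · show a * ((b' - b * h) / (a * b' - a' * b)) + b * ((a * h - a') / (a * b' - a' * b)) = 1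
      rw [mul_div_assoc', mul_div_assoc', ← add_div, div_eq_one_iff_eq hD]; ring
    · show a' * ((b' - b * h) / (a * b' - a' * b)) + b' * ((a * h - a') / (a * b' - a' * b)) = h
      rw [mul_div_assoc', mul_div_assoc', ← add_div, div_eq_iff hD]; ring
  have hnz : ∀ h : F, ((xs h, ys h) : F × F) ≠ 0 := by
    intro h hc
    rw [Prod.mk_eq_zero] at hc
    have h1 := (hsol h).1
    rw [hc.1, hc.2] at h1
    simp at h1
  -- Part 1 : unique solution
  have part1 : ∀ h : F, h ^ t = 1 →
      ∃! q : F × F, a * q.1 + b * q.2 = 1 ∧ a' * q.1 + b' * q.2 = h := by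
    intro h _
    refine ⟨(xs h, ys h), ⟨(hsol h).1, (hsol h).2⟩, ?_⟩
    rintro ⟨x, y⟩ ⟨e1, e2⟩
    have hx : x = xs h := by
      show x = (b' - b * h) / (a * b' - a' * b)
      rw [eq_div_iff hD]; linear_combination b' * e1 - b * e2
    have hy : y = ys h := by
      show y = (a * h - a') / (a * b' - a' * b)
      rw [eq_div_iff hD]; linear_combination a * e2 - a' * e1
    simp [hx, hy]
  -- Part 3 : characterization of common neighbors
  have part3 : ∀ w : FurediVertex F t,
      (FurediAdj (Quot.mk (FurediRel t) ⟨(a, b), hab⟩) w ∧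
        FurediAdj (Quot.mk (FurediRel t) ⟨(a', b'), hab'⟩) w) ↔
      ∃ (h x y : F) (hxy : ((x, y) : F × F) ≠ 0), h ^ t = 1 ∧
        a * x + b * y = 1 ∧ a' * x + b' * y = h ∧
        w = Quot.mk (FurediRel t) ⟨(x, y), hxy⟩ := by
    intro w
    constructor
    · rintro ⟨⟨p, q, hp, hq, hpq⟩, ⟨p', q', hp', hq', hpq'⟩⟩
      obtain ⟨g, hg, hgp⟩ := furediRel_of_quot_eq ht0 hp
      obtain ⟨g', hg', hgp'⟩ := furediRel_of_quot_eq ht0 hp'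
      obtain ⟨k, hk, hkq⟩ := furediRel_of_quot_eq ht0 (hq'.trans hq.symm)
      obtain ⟨⟨x, y⟩, hxy0⟩ := q
      have hpa : (p : F × F).1 * g = a := by
        have := congrArg Prod.fst hgp; simp at this; rw [this]; ring
      have hpb : (p : F × F).2 * g = b := by
        have := congrArg Prod.snd hgp; simp at this; rw [this]; ring
      have hpa' : (p' : F × F).1 * g' = a' := by
        have := congrArg Prod.fst hgp'; simp at this; rw [this]; ring
      have hpb' : (p' : F × F).2 * g' = b' := by
        have := congrArg Prod.snd hgp'; simp at this; rw [this]; ring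
      have hq1 : x = k * (q' : F × F).1 := by
        have := congrArg Prod.fst hkq; simpa using this
      have hq2 : y = k * (q' : F × F).2 := by
        have := congrArg Prod.snd hkq; simpa using this
      have hpq2 : ((p : F × F).1 * x + (p : F × F).2 * y) ^ t = 1 := hpq
      have hs : (a * x + b * y) ^ t = 1 := by
        have e : (a * x + b * y) ^ t
            = ((p : F × F).1 * x + (p : F × F).2 * y) ^ t * g ^ t := by
          rw [← mul_pow]; congr 1; rw [← hpa, ← hpb]; ring
        rw [e, hpq2, hg, one_mul]
      have hr : (a' * x + b' * y) ^ t = 1 := by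
        have e1 : (a' * (q' : F × F).1 + b' * (q' : F × F).2) ^ t = 1 := by
          have e : (a' * (q' : F × F).1 + b' * (q' : F × F).2) ^ t
              = ((p' : F × F).1 * (q' : F × F).1 + (p' : F × F).2 * (q' : F × F).2) ^ t
                * g' ^ t := by
            rw [← mul_pow]; congr 1; rw [← hpa', ← hpb']; ring
          rw [e, hpq', hg', one_mul]
        have e : (a' * x + b' * y) ^ t
            = (a' * (q' : F × F).1 + b' * (q' : F × F).2) ^ t * k ^ t := by
          rw [← mul_pow]; congr 1; rw [hq1, hq2]; ring
        rw [e, e1, hk, one_mul]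
      set s := a * x + b * y with hsdef
      have hs0 : s ≠ 0 := fun h0 => by
        rw [h0, zero_pow ht0.ne'] at hs; exact zero_ne_one hs
      refine ⟨(a' * x + b' * y) / s, x / s, y / s, ?_, ?_, ?_, ?_, ?_⟩
      · intro hc
        rw [Prod.mk_eq_zero] at hc
        have h1 : a * (x / s) + b * (y / s) = 1 := by
          field_simp; exact hsdef.symm
        rw [hc.1, hc.2] at h1; simp at h1
      · rw [div_pow, hr, hs, div_one]
      · field_simp; exact hsdef.symm
      · field_simp
      · rw [← hq]
        apply Quot.sound
        exact ⟨s⁻¹, by rw [inv_pow, hs, inv_one], by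
          simp only [div_eq_inv_mul]⟩
    · rintro ⟨h, x, y, hxy, hht, e1, e2, rfl⟩
      constructor
      · exact ⟨⟨(a, b), hab⟩, ⟨(x, y), hxy⟩, rfl, rfl, by
          simp only; rw [e1, one_pow]⟩
      · exact ⟨⟨(a', b'), hab'⟩, ⟨(x, y), hxy⟩, rfl, rfl, by
          simp only; rw [e2, hht]⟩
  refine ⟨part1, ?_, part3⟩
  -- Part 2 : count
  have himg : {w : FurediVertex F t |
        FurediAdj (Quot.mk (FurediRel t) ⟨(a, b), hab⟩) w ∧
        FurediAdj (Quot.mk (FurediRel t) ⟨(a', b'), hab'⟩) w}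
      = (fun h : F => Quot.mk (FurediRel t) ⟨(xs h, ys h), hnz h⟩) '' {h : F | h ^ t = 1} := by
    ext w
    rw [Set.mem_setOf_eq, part3 w]
    constructor
    · rintro ⟨h, x, y, hxy, hht, e1, e2, rfl⟩
      refine ⟨h, hht, ?_⟩
      have heq : ((x, y) : F × F) = (xs h, ys h) :=
        (part1 h hht).unique ⟨e1, e2⟩ ⟨(hsol h).1, (hsol h).2⟩
      simp only
      congr 1
      exact Subtype.ext heq.symm
    · rintro ⟨h, hht, rfl⟩
      exact ⟨h, xs h, ys h, hnz h, hht, (hsol h).1, (hsol h).2, rfl⟩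
  have hinj : Set.InjOn (fun h : F => Quot.mk (FurediRel t) ⟨(xs h, ys h), hnz h⟩)
      {h : F | h ^ t = 1} := by
    intro h1 _ h2 _ heq
    obtain ⟨c, hc, hcc⟩ := furediRel_of_quot_eq ht0 heq
    have e1 : xs h2 = c * xs h1 := by
      have := congrArg Prod.fst hcc; simpa using this
    have e2 : ys h2 = c * ys h1 := by
      have := congrArg Prod.snd hcc; simpa using this
    have hc1 : c = 1 := by
      have e3 := (hsol h2).1
      rw [e1, e2] at e3
      have h1' := (hsol h1).1
      linear_combination e3 - c * h1'
    have e3 := (hsol h2).2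
    rw [e1, e2, hc1, one_mul, one_mul] at e3
    rw [← e3]
    exact ((hsol h1).2).symm
  rw [himg]; refine (Set.ncard_image_of_injOn hinj).trans ?_
  -- count of t-th roots of unity
  have hq1 : Fintype.card F - 1 ≠ 0 := by
    have := Fintype.one_lt_card (α := F)
    omega
  obtain ⟨g, hg⟩ := IsCyclic.exists_ofOrder_eq_natCard (α := Fˣ)
  have hcard : Nat.card Fˣ = Fintype.card F - 1 := by
    rw [Nat.card_eq_fintype_card, Fintype.card_units]
  rw [hcard] at hg
  obtain ⟨ζ, hζ⟩ : ∃ ζ : Fˣ, orderOf ζ = t := by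
    refine ⟨g ^ ((Fintype.card F - 1) / t), ?_⟩
    rw [orderOf_pow, hg, Nat.gcd_eq_right (Nat.div_dvd_of_dvd hdvd),
      Nat.div_div_self hdvd hq1]
  have hprim : IsPrimitiveRoot ((ζ : Fˣ) : F) t :=
    IsPrimitiveRoot.coe_units_iff.mpr (hζ ▸ IsPrimitiveRoot.orderOf ζ)
  have hset : {h : F | h ^ t = 1} = ↑(Polynomial.nthRootsFinset t (1 : F)) := by
    ext x
    simp [Polynomial.mem_nthRootsFinset ht0 (1 : F)]
  rw [hset, Set.ncard_coe_finset, hprim.card_nthRootsFinset]
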